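/- Let (X,d) be a compact metric space and suppose x₁, x₂ ∈ C ⊆ X are distinct points such that each xᵢ is the limit of a sequence of pairwise disjoint clopen subsets Sₙⁱ of X, each homeomorphic to the circle S¹, with diam(Sₙⁱ) → 0 and d-distance from Sₙⁱ to xᵢ tending to 0. Then for ε = d(x₁,x₂)/2 and every δ with 0 < δ ≤ ε there exists a homeomorphism h of X which is the identity outside {x : d(x,C) < δ} but moves some point a distance at least ε. -/

import Mathlib

open Metric Set

lemma swap_clopen_homeo {X : Type*} [TopologicalSpace X] {A B : Set X}
    (hA : IsClopen A) (hB : IsClopen B) (hAB : Disjoint A B) (g : A ≃ₜ B) :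
    ∃ h : X ≃ₜ X, (∀ y (hy : y ∈ A), h y = g ⟨y, hy⟩) ∧
      (∀ y, y ∉ A → y ∉ B → h y = y) := by
  classical
  set f : X → X := fun y =>
    if hy : y ∈ A then (g ⟨y, hy⟩ : X)
    else if hy' : y ∈ B then (g.symm ⟨y, hy'⟩ : X) else y with hf
  have hfA : ∀ y (hy : y ∈ A), f y = g ⟨y, hy⟩ := fun y hy => dif_pos hy
  have hfB : ∀ y (hy : y ∈ B), f y = g.symm ⟨y, hy⟩ := by
    intro y hy
    have hnA : y ∉ A := fun h => Set.disjoint_left.mp hAB h hy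
    simp [hf, hnA, hy]
  have hfid : ∀ y, y ∉ A → y ∉ B → f y = y := by
    intro y h1 h2; simp [hf, h1, h2]
  have hinv : Function.Involutive f := by
    intro y
    by_cases hy : y ∈ A
    · rw [hfA y hy]
      have hb : ((g ⟨y, hy⟩ : B) : X) ∈ B := (g ⟨y, hy⟩).2
      rw [hfB _ hb]
      simp
    · by_cases hy' : y ∈ B
      · rw [hfB y hy']
        have ha : ((g.symm ⟨y, hy'⟩ : A) : X) ∈ A := (g.symm ⟨y, hy'⟩).2
        rw [hfA _ ha]
        simp
      · rw [hfid y hy hy', hfid y hy hy']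
  have hcont : Continuous f := by
    rw [continuous_iff_continuousAt]
    intro y
    by_cases hy : y ∈ A
    · have hco : ContinuousOn f A := by
        have hres : A.domRestrict f = fun z => (g z : X) := by
          funext z; exact hfA z z.2
        rw [continuousOn_iff_continuous_restrict, hres]
        exact continuous_subtype_val.comp g.continuous
      exact hco.continuousAt (hA.isOpen.mem_nhds hy)
    · by_cases hy' : y ∈ B
      · have hco : ContinuousOn f B := by
          have hres : B.domRestrict f = fun z => (g.symm z : X) := by
            funext z; exact hfB z z.2
          rw [continuousOn_iff_continuous_restrict, hres]
          exact continuous_subtype_val.comp g.symm.continuous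
        exact hco.continuousAt (hB.isOpen.mem_nhds hy')
      · have hopen : IsOpen ((A ∪ B)ᶜ) := (hA.isClosed.union hB.isClosed).isOpen_compl
        have hmem : (A ∪ B)ᶜ ∈ nhds y := hopen.mem_nhds (by simp [hy, hy'])
        have heq : f =ᶠ[nhds y] id := by
          filter_upwards [hmem] with z hz
          exact hfid z (fun h => hz (Or.inl h)) (fun h => hz (Or.inr h))
        exact continuousAt_id.congr heq.symm
  exact ⟨⟨hinv.toPerm f, hcont, hcont⟩, hfA, hfid⟩

/-- If two distinct points of `C` are limits of pairwise disjoint clopen circles, then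
for `ε = d(x₀,x₁)/2` and any `0 < δ ≤ ε` there is a homeomorphism of `X` which is the
identity outside the `δ`-neighborhood of `C` but moves some point a distance at
least `ε`. -/
theorem exists_homeo_moving_far {X : Type*} [MetricSpace X] [CompactSpace X]
    (C : Set X) (hC : IsClosed C)
    (x : Fin 2 → X) (hxC : ∀ i, x i ∈ C) (hne : x 0 ≠ x 1)
    (S : Fin 2 → ℕ → Set X)
    (hclopen : ∀ i n, IsClopen (S i n))
    (hcirc : ∀ i n, Nonempty (S i n ≃ₜ Circle))
    (hdisj : ∀ i n j m, (i, n) ≠ (j, m) → Disjoint (S i n) (S j m))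
    (hdiam : ∀ i, Filter.Tendsto (fun n => Metric.diam (S i n)) Filter.atTop (nhds 0))
    (hdist : ∀ i,
      Filter.Tendsto (fun n => Metric.infDist (x i) (S i n)) Filter.atTop (nhds 0)) :
    ∀ δ : ℝ, 0 < δ → δ ≤ dist (x 0) (x 1) / 2 →
      ∃ h : X ≃ₜ X, (∀ y : X, δ ≤ Metric.infDist y C → h y = y) ∧
        ∃ y : X, dist (x 0) (x 1) / 2 ≤ dist (h y) y := by
  intro δ hδ hδle
  have key : ∀ i : Fin 2, ∃ n, ∀ y ∈ S i n, dist (x i) y < δ / 2 := by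
    intro i
    have h1 : ∀ᶠ n in Filter.atTop, Metric.diam (S i n) < δ / 8 :=
      (hdiam i).eventually_lt_const (by linarith)
    have h2 : ∀ᶠ n in Filter.atTop, Metric.infDist (x i) (S i n) < δ / 8 :=
      (hdist i).eventually_lt_const (by linarith)
    obtain ⟨n, hn1, hn2⟩ := (h1.and h2).exists
    refine ⟨n, fun y hy => ?_⟩
    have hne' : (S i n).Nonempty := by
      obtain ⟨e⟩ := hcirc i n
      exact ⟨(e.symm 1 : S i n), (e.symm 1).2⟩
    obtain ⟨s, hs, hds⟩ := (Metric.infDist_lt_iff hne').mp hn2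
    have hbd : Bornology.IsBounded (S i n) :=
      (isCompact_univ.isBounded).subset (subset_univ _)
    have hdy : dist s y ≤ Metric.diam (S i n) := Metric.dist_le_diam_of_mem hbd hs hy
    calc dist (x i) y ≤ dist (x i) s + dist s y := dist_triangle _ _ _
      _ < δ/8 + δ/8 := by linarith
      _ ≤ δ/2 := by linarith
  obtain ⟨n0, hn0⟩ := key 0
  obtain ⟨n1, hn1⟩ := key 1
  have hAB : Disjoint (S 0 n0) (S 1 n1) := hdisj 0 n0 1 n1 (by simp)
  obtain ⟨e0⟩ := hcirc 0 n0
  obtain ⟨e1⟩ := hcirc 1 n1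
  obtain ⟨h, hhA, hhid⟩ :=
    swap_clopen_homeo (hclopen 0 n0) (hclopen 1 n1) hAB (e0.trans e1.symm)
  refine ⟨h, ?_, ?_⟩
  · intro y hy
    have hy0 : y ∉ S 0 n0 := by
      intro hmem
      have hle : Metric.infDist y C ≤ dist y (x 0) :=
        Metric.infDist_le_dist_of_mem (hxC 0)
      have hd : dist (x 0) y < δ/2 := hn0 y hmem
      rw [dist_comm] at hd
      linarith
    have hy1 : y ∉ S 1 n1 := by
      intro hmem
      have hle : Metric.infDist y C ≤ dist y (x 1) :=
        Metric.infDist_le_dist_of_mem (hxC 1)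
      have hd : dist (x 1) y < δ/2 := hn1 y hmem
      rw [dist_comm] at hd
      linarith
    exact hhid y hy0 hy1
  · have hyA : ((e0.symm 1 : S 0 n0) : X) ∈ S 0 n0 := (e0.symm 1).2
    set y : X := ((e0.symm 1 : S 0 n0) : X)
    refine ⟨y, ?_⟩
    have hhy : h y = ((e0.trans e1.symm) ⟨y, hyA⟩ : X) := hhA y hyA
    have hyB : h y ∈ S 1 n1 := by
      rw [hhy]; exact ((e0.trans e1.symm) ⟨y, hyA⟩).2
    have d0 : dist (x 0) y < δ/2 := hn0 y hyA
    have d1 : dist (x 1) (h y) < δ/2 := hn1 _ hyB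
    have tri : dist (x 0) (x 1) ≤ dist (x 0) y + dist y (h y) + dist (h y) (x 1) :=
      dist_triangle4 _ _ _ _
    have c1 : dist y (h y) = dist (h y) y := dist_comm _ _
    have c2 : dist (h y) (x 1) = dist (x 1) (h y) := dist_comm _ _
    linarith
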